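/- For every integer p ≥ 1, let G*_p be the graph obtained from the complete graph K_5 by adding, for each edge e = uv of K_5, a path P_e from u to v consisting of p new internal vertices (the paths for distinct edges being internally disjoint). Then contracting any single edge of the original K_5 yields a planar graph. -/
import Mathlib


open SimpleGraph

/-- A bundled finite simple graph. -/
structure FinGraph where
  V : Type
  [finV : Finite V]
  G : SimpleGraph V

attribute [instance] FinGraph.finV

/-- The bundled version of a finite simple graph. -/
def FinGraph.of (V : Type) [Finite V] (G : SimpleGraph V) : FinGraph := ⟨V, G⟩

/-- `H` is (an isomorphic copy of) the graph obtained from `G` by contracting the edge `uv`: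
there is a surjection `f` identifying exactly `u` and `v`, with `H` having precisely the
images of edges of `G` as edges. -/
def IsEdgeContractionOf {V W : Type} (G : SimpleGraph V) (u v : V) (H : SimpleGraph W) : Prop :=
  G.Adj u v ∧ ∃ f : V → W, f u = f v ∧ Function.Surjective f ∧
    (∀ a b : V, a ≠ b → f a = f b → (a = u ∧ b = v) ∨ (a = v ∧ b = u)) ∧
    (∀ x y : W, H.Adj x y ↔ x ≠ y ∧ ∃ a b : V, f a = x ∧ f b = y ∧ G.Adj a b)

/-- `B` is obtained from `A` by contracting one edge. -/
def ContractionStep (A B : FinGraph) : Prop :=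
  ∃ u v : A.V, IsEdgeContractionOf A.G u v B.G

/-- `B` is obtained from `A` by at most `k` edge contractions. -/
def ContractsInAtMost (k : ℕ) (A B : FinGraph) : Prop :=
  ∃ n : ℕ, n ≤ k ∧ ∃ c : ℕ → FinGraph, c 0 = A ∧ c n = B ∧
    ∀ i, i < n → ContractionStep (c i) (c (i + 1))

/-- `B` is a contraction of `A`, i.e. `B` can be obtained (up to isomorphism) from `A`
by a sequence of edge contractions. -/
def IsContraction (A B : FinGraph) : Prop :=
  ∃ C : FinGraph, Relation.ReflTransGen ContractionStep A C ∧ Nonempty (C.G ≃g B.G)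

/-- `B` is obtained from `A` by deleting one edge. -/
def EdgeDeletionStep (A B : FinGraph) : Prop :=
  ∃ e : Sym2 A.V, e ∈ A.G.edgeSet ∧ Nonempty (B.G ≃g A.G.deleteEdges {e})

/-- `B` is obtained from `A` by deleting one vertex. -/
def VertexDeletionStep (A B : FinGraph) : Prop :=
  ∃ v : A.V, Nonempty (B.G ≃g A.G.induce {x : A.V | x ≠ v})

/-- One minor operation: an edge contraction, an edge deletion or a vertex deletion. -/
def MinorStep (A B : FinGraph) : Prop :=
  ContractionStep A B ∨ EdgeDeletionStep A B ∨ VertexDeletionStep A B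

/-- `A` contains `B` as a minor: `A` can be modified to (an isomorphic copy of) `B` by a
sequence of edge contractions, edge deletions and vertex deletions. -/
def HasMinor (A B : FinGraph) : Prop :=
  ∃ C : FinGraph, Relation.ReflTransGen MinorStep A C ∧ Nonempty (C.G ≃g B.G)

/-- The complete graph on five vertices, bundled. -/
def K5 : FinGraph := FinGraph.of (Fin 5) ⊤

/-- The complete bipartite graph `K_{3,3}`, bundled. -/
def K33 : FinGraph := FinGraph.of (Fin 3 ⊕ Fin 3) (completeBipartiteGraph (Fin 3) (Fin 3))

/-- A finite graph is planar iff (by Kuratowski's theorem) it has no `K₅` and no `K_{3,3}`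
minor. -/
def FinGraph.IsPlanar (A : FinGraph) : Prop := ¬ HasMinor A K5 ∧ ¬ HasMinor A K33

/-- `A` can be contracted to a planar graph using at most `k` edge contractions. -/
def ContractiblePlanar (k : ℕ) (A : FinGraph) : Prop :=
  ∃ B : FinGraph, ContractsInAtMost k A B ∧ B.IsPlanar

/-- `P` is an `H`-witness structure of `G`: a partition of `V(G)` into nonempty connected
pieces `P x`, one for each vertex `x` of `H`, such that distinct pieces are adjacent iff the
corresponding vertices of `H` are adjacent. -/
def IsWitnessStructure {V X : Type} (G : SimpleGraph V) (H : SimpleGraph X)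
    (P : X → Set V) : Prop :=
  (∀ x : X, (P x).Nonempty) ∧
  (∀ x y : X, x ≠ y → Disjoint (P x) (P y)) ∧
  (∀ v : V, ∃ x : X, v ∈ P x) ∧
  (∀ x : X, (G.induce (P x)).Connected) ∧
  (∀ x y : X, x ≠ y → (H.Adj x y ↔ ∃ a ∈ P x, ∃ b ∈ P y, G.Adj a b))

/-- `uv` is a witness edge: an edge of `G` whose end-vertices belong to two different
witness sets of `P`. -/
def IsWitnessEdge {V X : Type} (G : SimpleGraph V) (P : X → Set V) (u v : V) : Prop :=
  G.Adj u v ∧ ¬ ∃ x : X, u ∈ P x ∧ v ∈ P x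

/-- Index type for the ten edges of `K₅`: ordered pairs `(i, j)` with `i < j`. -/
abbrev K5Edge : Type := {q : Fin 5 × Fin 5 // q.1 < q.2}

/-- The graph `G*_p`: the complete graph `K₅` together with, for each edge `{i, j}` of `K₅`
(with `i < j`), a path from `i` to `j` with `p` new internal vertices
`(⟨(i,j),_⟩, 0), …, (⟨(i,j),_⟩, p-1)`, the paths for distinct edges being internally
disjoint. -/
def K5WithPaths (p : ℕ) : SimpleGraph (Fin 5 ⊕ K5Edge × Fin p) :=
  SimpleGraph.fromRel (fun a b =>
    match a, b with
    | Sum.inl _, Sum.inl _ => True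
    | Sum.inl i, Sum.inr (e, t) => (i = e.val.1 ∧ (t : ℕ) = 0) ∨ (i = e.val.2 ∧ (t : ℕ) = p - 1)
    | Sum.inr (e, t), Sum.inr (e', t') => e = e' ∧ (t' : ℕ) = (t : ℕ) + 1
    | _, _ => False)

def ConnIn {V : Type} (G : SimpleGraph V) (S : Set V) : Prop :=
  ∀ a ∈ S, ∀ b ∈ S, ∃ w : G.Walk a b, ∀ v ∈ w.support, v ∈ S

def WFam {V X : Type} (G : SimpleGraph V) (K : SimpleGraph X) (P : X → Set V) : Prop :=
  (∀ x, (P x).Nonempty) ∧ (∀ x y, x ≠ y → Disjoint (P x) (P y)) ∧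
  (∀ x, ConnIn G (P x)) ∧
  (∀ x y, K.Adj x y → ∃ a ∈ P x, ∃ b ∈ P y, G.Adj a b)

lemma wfam_map {V W X : Type} {G : SimpleGraph V} {G' : SimpleGraph W} {K : SimpleGraph X}
    {P : X → Set V} (φ : G →g G') (hφ : Function.Injective φ) (h : WFam G K P) :
    WFam G' K (fun x => φ '' P x) := by
  obtain ⟨h1, h2, h3, h4⟩ := h
  refine ⟨fun x => (h1 x).image _, fun x y hxy => ?_, fun x => ?_, fun x y hadj => ?_⟩
  · rw [Set.disjoint_left]
    rintro a ⟨u, hu, rfl⟩ ⟨v, hv, huv⟩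
    cases hφ huv
    exact Set.disjoint_left.mp (h2 x y hxy) hu hv
  · rintro a ⟨u, hu, rfl⟩ b ⟨v, hv, rfl⟩
    obtain ⟨w, hw⟩ := h3 x u hu v hv
    refine ⟨w.map φ, fun z hz => ?_⟩
    rw [Walk.support_map, List.mem_map] at hz
    obtain ⟨c, hc, rfl⟩ := hz
    exact ⟨c, hw c hc, rfl⟩
  · obtain ⟨a, ha, b, hb, hab⟩ := h4 x y hadj
    exact ⟨φ a, ⟨a, ha, rfl⟩, φ b, ⟨b, hb, rfl⟩, φ.map_adj hab⟩

lemma wfam_contract {V W X : Type} {G : SimpleGraph V} {H : SimpleGraph W} {u v : V} {f : V → W}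
    (huv : G.Adj u v) (hfu : f u = f v) (hsurj : Function.Surjective f)
    (hmerge : ∀ a b : V, a ≠ b → f a = f b → (a = u ∧ b = v) ∨ (a = v ∧ b = u))
    (hiff : ∀ x y : W, H.Adj x y ↔ x ≠ y ∧ ∃ a b : V, f a = x ∧ f b = y ∧ G.Adj a b)
    {K : SimpleGraph X} {Q : X → Set W} (h : WFam H K Q) :
    WFam G K (fun x => f ⁻¹' Q x) := by
  obtain ⟨h1, h2, h3, h4⟩ := h
  have hsame : ∀ a b : V, f a = f b → a = b ∨ G.Adj a b := by
    intro a b hab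
    by_cases h : a = b
    · exact Or.inl h
    · rcases hmerge a b h hab with ⟨rfl, rfl⟩ | ⟨rfl, rfl⟩
      · exact Or.inr huv
      · exact Or.inr huv.symm
  have lift : ∀ {x y : W} (w : H.Walk x y) (Qs : Set W), (∀ z ∈ w.support, z ∈ Qs) →
      ∀ a b : V, f a = x → f b = y → ∃ w' : G.Walk a b, ∀ c ∈ w'.support, f c ∈ Qs := by
    intro x y w
    induction w with
    | @nil z =>
      intro Qs hQ a b ha hb
      have hx : z ∈ Qs := hQ _ (by simp)
      rcases hsame a b (by rw [ha, hb]) with rfl | hab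
      · refine ⟨Walk.nil, ?_⟩
        intro c hc
        simp only [Walk.support_nil, List.mem_singleton] at hc
        subst hc
        rw [ha]; exact hx
      · refine ⟨Walk.cons hab Walk.nil, ?_⟩
        intro c hc
        simp [Walk.support_cons] at hc
        rcases hc with rfl | rfl
        · rw [ha]; exact hx
        · rw [hb]; exact hx
    | @cons x z y hxz w ih =>
      intro Qs hQ a b ha hb
      have hx : x ∈ Qs := hQ _ (by simp)
      have hz : z ∈ Qs := hQ _ (by simp)
      have hQ' : ∀ c ∈ w.support, c ∈ Qs := fun c hc => hQ _ (by simp [Walk.support_cons, hc])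
      obtain ⟨-, a', b', ha', hb', hab'⟩ := (hiff x z).mp hxz
      obtain ⟨w2, hw2⟩ := ih Qs hQ' b' b hb' hb
      rcases hsame a a' (by rw [ha, ha']) with rfl | haa'
      · refine ⟨Walk.cons hab' w2, ?_⟩
        intro c hc
        simp [Walk.support_cons] at hc
        rcases hc with rfl | hc
        · rw [ha]; exact hx
        · exact hw2 c hc
      · refine ⟨Walk.cons haa' (Walk.cons hab' w2), ?_⟩
        intro c hc
        simp [Walk.support_cons] at hc
        rcases hc with rfl | rfl | hc
        · rw [ha]; exact hx
        · rw [ha']; exact hx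
        · exact hw2 c hc
  refine ⟨fun x => ?_, fun x y hxy => ?_, fun x => ?_, fun x y hadj => ?_⟩
  · obtain ⟨q, hq⟩ := h1 x
    obtain ⟨a, rfl⟩ := hsurj q
    exact ⟨a, hq⟩
  · rw [Set.disjoint_left]
    intro a ha hb
    exact Set.disjoint_left.mp (h2 x y hxy) ha hb
  · intro a ha b hb
    obtain ⟨w, hw⟩ := h3 x (f a) ha (f b) hb
    exact lift w (Q x) hw a b rfl rfl
  · obtain ⟨q1, hq1, q2, hq2, hq⟩ := h4 x y hadj
    obtain ⟨-, a, b, rfl, rfl, hab⟩ := (hiff q1 q2).mp hq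
    exact ⟨a, hq1, b, hq2, hab⟩

lemma adj_inr_inr {p : ℕ} {e e' : K5Edge} {t t' : Fin p}
    (h : (K5WithPaths p).Adj (Sum.inr (e, t)) (Sum.inr (e', t'))) :
    e = e' ∧ ((t' : ℕ) = (t : ℕ) + 1 ∨ (t : ℕ) = (t' : ℕ) + 1) := by
  rw [K5WithPaths, fromRel_adj] at h
  obtain ⟨hne, h | h⟩ := h
  · exact ⟨h.1, Or.inl h.2⟩
  · exact ⟨h.1.symm, Or.inr h.2⟩

lemma adj_inr_inl {p : ℕ} {e : K5Edge} {t : Fin p} {k : Fin 5}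
    (h : (K5WithPaths p).Adj (Sum.inr (e, t)) (Sum.inl k)) :
    (k = e.val.1 ∧ (t : ℕ) = 0) ∨ (k = e.val.2 ∧ (t : ℕ) = p - 1) := by
  rw [K5WithPaths, fromRel_adj] at h
  obtain ⟨hne, h | h⟩ := h
  · exact h.elim
  · exact h

def WFamE {X : Type} (A : FinGraph) (K : SimpleGraph X) : Prop := ∃ P : X → Set A.V, WFam A.G K P

lemma minorStep_pull {A B : FinGraph} {X : Type} {K : SimpleGraph X} (h : MinorStep A B) :
    WFamE B K → WFamE A K := by
  rintro ⟨Q, hQ⟩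
  rcases h with ⟨u, v, hadj, f, hfu, hsurj, hmerge, hiff⟩ | ⟨e, he, ⟨iso⟩⟩ | ⟨v, ⟨iso⟩⟩
  · exact ⟨_, wfam_contract hadj hfu hsurj hmerge hiff hQ⟩
  · have h1 := wfam_map iso.toHom iso.injective hQ
    exact ⟨_, wfam_map (Hom.ofLE (deleteEdges_le _)) (fun a b hab => hab) h1⟩
  · have h1 := wfam_map iso.toHom iso.injective hQ
    exact ⟨_, wfam_map (Embedding.induce (G := A.G) {x | x ≠ v}).toHom (Embedding.induce (G := A.G) {x | x ≠ v}).injective h1⟩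

lemma rtg_pull {A C : FinGraph} (h : Relation.ReflTransGen MinorStep A C) {X : Type}
    {K : SimpleGraph X} : WFamE C K → WFamE A K := by
  induction h with
  | refl => exact id
  | tail _ hstep ih => exact fun hC => ih (minorStep_pull hstep hC)

lemma hasMinor_wfam {A B : FinGraph} (h : HasMinor A B) : WFamE A B.G := by
  obtain ⟨C, hrtg, ⟨iso⟩⟩ := h
  refine rtg_pull hrtg ⟨fun x => {iso.symm x}, fun x => ⟨_, rfl⟩, fun x y hxy => ?_, fun x => ?_,
    fun x y hadj => ?_⟩
  · simp only [Set.disjoint_singleton]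
    exact fun hc => hxy (iso.symm.injective hc)
  · rintro a rfl b rfl
    refine ⟨Walk.nil, ?_⟩
    intro c hc
    simpa using hc
  · exact ⟨_, rfl, _, rfl, iso.symm.map_adj_iff.mpr hadj⟩

lemma aux_conf {p : ℕ} {S : Set (Fin 5 ⊕ K5Edge × Fin p)} (hno : ∀ k, Sum.inl k ∉ S) :
    ∀ {a b : Fin 5 ⊕ K5Edge × Fin p} (w : (K5WithPaths p).Walk a b),
      (∀ z ∈ w.support, z ∈ S) → ∀ e t, a = Sum.inr (e, t) → ∃ t', b = Sum.inr (e, t') := by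
  intro a b w
  induction w with
  | nil => exact fun _ e t ha => ⟨t, ha⟩
  | @cons a x b hadj w ih =>
    intro hw e t ha
    subst ha
    have hxS : x ∈ S := hw _ (by simp [Walk.support_cons])
    match x, hxS with
    | Sum.inl k, hxS => exact absurd hxS (hno k)
    | Sum.inr (e2, t2), hxS =>
      obtain ⟨rfl, -⟩ := adj_inr_inr hadj
      exact ih (fun z hz => hw z (by simp [Walk.support_cons] at hz ⊢; tauto)) e t2 rfl

lemma aux_interval {p : ℕ} {S : Set (Fin 5 ⊕ K5Edge × Fin p)} (hno : ∀ k, Sum.inl k ∉ S) :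
    ∀ {a b : Fin 5 ⊕ K5Edge × Fin p} (w : (K5WithPaths p).Walk a b),
      (∀ z ∈ w.support, z ∈ S) → ∀ e (t1 t2 s : Fin p), a = Sum.inr (e, t1) →
      b = Sum.inr (e, t2) → (t1 : ℕ) ≤ s → (s : ℕ) ≤ t2 → Sum.inr (e, s) ∈ S := by
  intro a b w
  induction w with
  | @nil u =>
    intro hw e t1 t2 s ha hb h1 h2
    rw [ha] at hb
    obtain ⟨-, h⟩ := Prod.mk.injEq .. ▸ (Sum.inr.injEq .. ▸ hb)
    have hs : s = t1 := Fin.val_injective (by have := congrArg Fin.val h; omega)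
    subst hs
    exact ha ▸ hw u (by simp)
  | @cons a x b hadj w ih =>
    intro hw e t1 t2 s ha hb h1 h2
    subst ha
    have haS : Sum.inr (e, t1) ∈ S := hw _ (by simp [Walk.support_cons])
    by_cases hs : (s : ℕ) = t1
    · have : s = t1 := Fin.val_injective hs
      subst this; exact haS
    · have hxS : x ∈ S := hw _ (by simp [Walk.support_cons])
      match x, hadj, hxS with
      | Sum.inl k, hadj, hxS => exact absurd hxS (hno k)
      | Sum.inr (e2, t2'), hadj, hxS =>
        obtain ⟨rfl, hrel⟩ := adj_inr_inr hadj
        refine ih (fun z hz => hw z (by simp [Walk.support_cons] at hz ⊢; tauto)) e t2' t2 s rfl hb ?_ h2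
        omega

lemma small_boundary {p : ℕ} {S : Set (Fin 5 ⊕ K5Edge × Fin p)} (hne : S.Nonempty)
    (hno : ∀ k, Sum.inl k ∉ S) (hconn : ConnIn (K5WithPaths p) S) :
    ∃ c1 c2, ∀ b ∉ S, (∃ a ∈ S, (K5WithPaths p).Adj a b) → b = c1 ∨ b = c2 := by
  classical
  obtain ⟨a0, ha0⟩ := hne
  match a0, ha0 with
  | Sum.inl k, ha0 => exact absurd ha0 (hno k)
  | Sum.inr (e, t0), ha0 =>
  let F : Finset (Fin p) := Finset.univ.filter (fun t => Sum.inr (e, t) ∈ S)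
  have hmem : ∀ t, t ∈ F ↔ Sum.inr (e, t) ∈ S := by
    intro t; simp [F]
  have hF : F.Nonempty := ⟨t0, (hmem t0).2 ha0⟩
  set tmin := F.min' hF with htmin_def
  set tmax := F.max' hF with htmax_def
  have hminS : Sum.inr (e, tmin) ∈ S := (hmem _).1 (F.min'_mem hF)
  have hmaxS : Sum.inr (e, tmax) ∈ S := (hmem _).1 (F.max'_mem hF)
  have hint : ∀ s : Fin p, (tmin : ℕ) ≤ s → (s : ℕ) ≤ tmax → Sum.inr (e, s) ∈ S := by
    obtain ⟨w, hw⟩ := hconn _ hminS _ hmaxS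
    exact fun s h1 h2 => aux_interval hno w hw e tmin tmax s rfl rfl h1 h2
  have hSin : ∀ v ∈ S, ∃ t, v = Sum.inr (e, t) := by
    intro v hv
    obtain ⟨w, hw⟩ := hconn _ ha0 _ hv
    exact aux_conf hno w hw e t0 rfl
  refine ⟨(if h : 0 < (tmin : ℕ) then
      Sum.inr (e, ⟨(tmin : ℕ) - 1, Nat.lt_of_le_of_lt (Nat.sub_le _ _) tmin.isLt⟩)
    else Sum.inl e.val.1),
    (if h : (tmax : ℕ) + 1 < p then Sum.inr (e, ⟨(tmax : ℕ) + 1, h⟩) else Sum.inl e.val.2), ?_⟩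
  rintro b hb ⟨a, haS, hadj⟩
  obtain ⟨t, rfl⟩ := hSin a haS
  have htmin : (tmin : ℕ) ≤ t := F.min'_le t ((hmem t).2 haS)
  have htmax : (t : ℕ) ≤ tmax := F.le_max' t ((hmem t).2 haS)
  have htp : (t : ℕ) < p := t.isLt
  have htmaxp : (tmax : ℕ) < p := tmax.isLt
  match b, hb, hadj with
  | Sum.inl k, hb, hadj =>
    rcases adj_inr_inl hadj with ⟨rfl, ht⟩ | ⟨rfl, ht⟩
    · left
      rw [dif_neg (by omega)]
    · right
      rw [dif_neg (by omega)]
  | Sum.inr (e2, t2), hb, hadj =>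
    obtain ⟨heq, hrel⟩ := adj_inr_inr hadj
    subst heq
    have ht2 : (tmin : ℕ) ≤ t2 → (t2 : ℕ) ≤ tmax → False := fun h1 h2 => hb (hint t2 h1 h2)
    have ht2p : (t2 : ℕ) < p := t2.isLt
    rcases hrel with h1 | h1
    · right
      have h3 : (t2 : ℕ) = (tmax : ℕ) + 1 := by
        by_contra hc
        exact ht2 (by omega) (by omega)
      rw [dif_pos (by omega)]
      exact congrArg (fun z => Sum.inr (e, z)) (Fin.val_injective h3)
    · left
      have h3 : (t2 : ℕ) + 1 = (tmin : ℕ) := by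
        by_contra hc
        exact ht2 (by omega) (by omega)
      rw [dif_pos (by omega)]
      exact congrArg (fun z => Sum.inr (e, z)) (Fin.val_injective (by simp; omega))

lemma no_wfam {p : ℕ} {i j : Fin 5} (hij : i ≠ j) {X : Type} [Finite X]
    {K : SimpleGraph X} (x5 : Fin 5 → X) (hx5 : Function.Injective x5)
    (hdeg : ∀ x : X, ∃ y1 y2 y3 : X, y1 ≠ y2 ∧ y1 ≠ y3 ∧ y2 ≠ y3 ∧ y1 ≠ x ∧ y2 ≠ x ∧ y3 ≠ x ∧
      K.Adj x y1 ∧ K.Adj x y2 ∧ K.Adj x y3)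
    {P : X → Set (Fin 5 ⊕ K5Edge × Fin p)} (hW : WFam (K5WithPaths p) K P)
    (hsym : ∀ x, Sum.inl i ∈ P x → Sum.inl j ∈ P x) : False := by
  obtain ⟨h1, h2, h3, h4⟩ := hW
  have clash : ∀ y y' b, y ≠ y' → b ∈ P y → b ∈ P y' → False := fun y y' b hyy hb hb' =>
    Set.disjoint_left.mp (h2 y y' hyy) hb hb'
  have hub : ∀ x : X, ∃ k : Fin 5, Sum.inl k ∈ P x := by
    intro x
    by_contra hc
    push_neg at hc
    obtain ⟨c1, c2, hcc⟩ := small_boundary (h1 x) hc (h3 x)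
    obtain ⟨y1, y2, y3, d12, d13, d23, n1, n2, n3, a1, a2, a3⟩ := hdeg x
    have get : ∀ y, y ≠ x → K.Adj x y → ∃ b ∈ P y, b = c1 ∨ b = c2 := by
      intro y hy hadj
      obtain ⟨a, ha, b, hbm, hab⟩ := h4 x y hadj
      have hbx : b ∉ P x := fun hbx => clash y x b hy hbm hbx
      exact ⟨b, hbm, hcc b hbx ⟨a, ha, hab⟩⟩
    obtain ⟨b1, hb1, e1⟩ := get y1 n1 a1
    obtain ⟨b2, hb2, e2⟩ := get y2 n2 a2
    obtain ⟨b3, hb3, e3⟩ := get y3 n3 a3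
    rcases e1 with rfl | rfl <;> rcases e2 with rfl | rfl <;> rcases e3 with rfl | rfl <;>
      first
        | exact clash y1 y2 _ d12 hb1 hb2
        | exact clash y1 y3 _ d13 hb1 hb3
        | exact clash y2 y3 _ d23 hb2 hb3
  choose hubf hhub using hub
  have hinj : Function.Injective hubf := by
    intro x y hxy
    by_contra hne
    exact clash x y _ hne (hhub x) (hxy ▸ hhub y)
  have hcard : Nat.card X = 5 := by
    have u1 := Nat.card_le_card_of_injective hubf hinj
    have u2 := Nat.card_le_card_of_injective x5 hx5
    simp [Nat.card_eq_fintype_card] at u1 u2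
    omega
  have hbij : Function.Bijective hubf := (Nat.bijective_iff_injective_and_card hubf).2
    ⟨hinj, by simp [hcard, Nat.card_eq_fintype_card]⟩
  obtain ⟨xi, hxi⟩ := hbij.2 i
  obtain ⟨xj, hxj⟩ := hbij.2 j
  have hx : xi ≠ xj := fun h => hij (by rw [← hxi, ← hxj, h])
  have hji : Sum.inl j ∈ P xi := hsym xi (hxi ▸ hhub xi)
  exact clash xi xj _ hx hji (hxj ▸ hhub xj)

lemma hdeg_top : ∀ x : Fin 5, ∃ y1 y2 y3 : Fin 5, y1 ≠ y2 ∧ y1 ≠ y3 ∧ y2 ≠ y3 ∧ y1 ≠ x ∧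
    y2 ≠ x ∧ y3 ≠ x ∧ (⊤ : SimpleGraph (Fin 5)).Adj x y1 ∧ (⊤ : SimpleGraph (Fin 5)).Adj x y2 ∧
    (⊤ : SimpleGraph (Fin 5)).Adj x y3 := by decide

lemma hdeg_bip : ∀ x : Fin 3 ⊕ Fin 3, ∃ y1 y2 y3 : Fin 3 ⊕ Fin 3, y1 ≠ y2 ∧ y1 ≠ y3 ∧ y2 ≠ y3 ∧
    y1 ≠ x ∧ y2 ≠ x ∧ y3 ≠ x ∧ (completeBipartiteGraph (Fin 3) (Fin 3)).Adj x y1 ∧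
    (completeBipartiteGraph (Fin 3) (Fin 3)).Adj x y2 ∧
    (completeBipartiteGraph (Fin 3) (Fin 3)).Adj x y3 := by
  rintro (a | a)
  · exact ⟨Sum.inr 0, Sum.inr 1, Sum.inr 2, by simp, by simp, by simp, by simp, by simp, by simp,
      by simp, by simp, by simp⟩
  · exact ⟨Sum.inl 0, Sum.inl 1, Sum.inl 2, by simp, by simp, by simp, by simp, by simp, by simp,
      by simp, by simp, by simp⟩

/-- For every `p ≥ 1`, contracting any single edge of the original `K₅` in
`G*_p` yields a planar graph. -/
theorem k5WithPaths_contract_original_edge_planar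
    (p : ℕ) (hp : 1 ≤ p) (i j : Fin 5) (hij : i ≠ j)
    {X : Type} [Finite X] (H : SimpleGraph X)
    (h : IsEdgeContractionOf (K5WithPaths p) (Sum.inl i) (Sum.inl j) H) :
    (FinGraph.of X H).IsPlanar := by
  obtain ⟨huv, f, hfu, hsurj, hmerge, hiff⟩ := h
  constructor
  · rintro hm
    obtain ⟨Q, hQ⟩ := hasMinor_wfam hm
    have hP := wfam_contract huv hfu hsurj hmerge hiff hQ
    refine no_wfam hij id Function.injective_id hdeg_top hP ?_
    intro x hx
    show f (Sum.inl j) ∈ Q x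
    rw [← hfu]
    exact hx
  · rintro hm
    obtain ⟨Q, hQ⟩ := hasMinor_wfam hm
    have hP := wfam_contract huv hfu hsurj hmerge hiff hQ
    refine no_wfam hij (![Sum.inl 0, Sum.inl 1, Sum.inl 2, Sum.inr 0, Sum.inr 1] :
      Fin 5 → Fin 3 ⊕ Fin 3) (by decide) hdeg_bip hP ?_
    intro x hx
    show f (Sum.inl j) ∈ Q x
    rw [← hfu]
    exact hx
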